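/- Let N = (V,E,X) be an undirected phylogenetic network with distinguished edge e_ρ and desired indegrees d⁻ with 1 ≤ d⁻(v) ≤ deg(v), and suppose ∑_{v∈V} d⁻(v) = |E| + 1. Then (N, e_ρ, d⁻) is orientable if and only if (N, e_ρ, d⁻) has no degree cut. -/

import Mathlib

open Classical

/-- Indegree of a vertex in a digraph given by a relation. -/
noncomputable def inDeg {W : Type} (D : W → W → Prop) (b : W) : ℕ :=
  Nat.card {a : W // D a b}

/-- Outdegree of a vertex in a digraph given by a relation. -/
noncomputable def outDeg {W : Type} (D : W → W → Prop) (a : W) : ℕ :=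
  Nat.card {b : W // D a b}

/-- A digraph is acyclic if it has no directed cycle. -/
def DigraphAcyclic {W : Type} (D : W → W → Prop) : Prop :=
  ∀ a : W, ¬ Relation.TransGen D a a

/-- `D` is an orientation of the undirected graph `H`: every arc of `D` lies on an
edge of `H`, and every edge of `H` is given exactly one direction. -/
def IsOrientationOf {W : Type} (H : SimpleGraph W) (D : W → W → Prop) : Prop :=
  (∀ a b, D a b → H.Adj a b) ∧ (∀ a b, H.Adj a b → (D a b ↔ ¬ D b a))

/-- The graph obtained from `G` by subdividing the edge `{u,v}` with a new vertex
(represented by `none`). -/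
def subdivide {V : Type} (G : SimpleGraph V) (u v : V) : SimpleGraph (Option V) where
  Adj a b := match a, b with
    | some a', some b' => G.Adj a' b' ∧ ¬ (s(a', b') = s(u, v))
    | some a', none => a' = u ∨ a' = v
    | none, some b' => b' = u ∨ b' = v
    | none, none => False
  symm := by
    constructor
    intro a b h
    match a, b with
    | some a', some b' =>
        exact ⟨h.1.symm, fun he => h.2 (by rwa [Sym2.eq_swap] at he)⟩
    | some a', none => exact h
    | none, some b' => exact h
  loopless := by
    constructor
    intro a h
    match a with
    | some a' => exact G.loopless.irrefl a' h.1
    | none => exact h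


/-- An undirected (not necessarily binary) phylogenetic network: a connected
graph with no degree-2 vertices. -/
def IsUndirNet {V : Type} [Fintype V] (G : SimpleGraph V) [DecidableRel G.Adj] : Prop :=
  G.Connected ∧ ∀ w : V, G.degree w ≠ 2

/-- An orientation of `(N, e_ρ, d⁻)`: an acyclic orientation of the graph obtained
by subdividing the edge `{u,v}` with a root `ρ`, in which `ρ` has indegree `0`
(both its edges are directed outward) and every vertex `w` of `N` has indegree
exactly `d w`. -/
def IsDegOrientation {V : Type} (G : SimpleGraph V) (u v : V) (d : V → ℕ)
    (D : Option V → Option V → Prop) : Prop :=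
  IsOrientationOf (subdivide G u v) D ∧ DigraphAcyclic D ∧ inDeg D none = 0 ∧
    ∀ w : V, inDeg D (some w) = d w

/-- A degree cut for `(G, {u,v}, d)`: a pair `(V', E')` where `E'` is an edge-cut of
the subdivided graph separating the root from every vertex of `V'`, each edge of
`E'` is incident to exactly one element of `V'`, and each `w ∈ V'` is incident to
fewer than `d w` edges of `E'`. -/
def IsDegCut {V : Type} (G : SimpleGraph V) (u v : V) (d : V → ℕ)
    (V' : Set V) (E' : Set (Sym2 (Option V))) : Prop :=
  E' ⊆ (subdivide G u v).edgeSet ∧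
  ¬ ((subdivide G u v).deleteEdges E').Connected ∧
  (∀ w ∈ V', ¬ ((subdivide G u v).deleteEdges E').Reachable none (some w)) ∧
  (∀ e ∈ E', ∃! w : V, w ∈ V' ∧ (some w : Option V) ∈ e) ∧
  (∀ w ∈ V', {e ∈ E' | (some w : Option V) ∈ e}.ncard < d w)

/-! ### Auxiliary lemmas -/

lemma inDeg_eq_card {W : Type} [Fintype W] (D : W → W → Prop) (b : W) :
    inDeg D b = (Finset.univ.filter (fun a => D a b)).card := by
  classical
  rw [inDeg, Nat.card_eq_fintype_card, Fintype.card_subtype]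

lemma exists_cycle_of_pred {W : Type} [Finite W] (D : W → W → Prop) (S : Set W)
    (hne : S.Nonempty) (hpred : ∀ x ∈ S, ∃ y ∈ S, D y x) :
    ∃ a, Relation.TransGen D a a := by
  classical
  obtain ⟨x0, hx0⟩ := hne
  choose f hf1 hf2 using hpred
  let g : ℕ → {x // x ∈ S} := fun n => Nat.rec ⟨x0, hx0⟩ (fun _ p => ⟨f p.1 p.2, hf1 p.1 p.2⟩) n
  have hg : ∀ n, D (g (n+1)).1 (g n).1 := fun n => hf2 (g n).1 (g n).2
  have hchain : ∀ n m : ℕ, m < n → Relation.TransGen D (g n).1 (g m).1 := by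
    intro n
    induction n with
    | zero => intro m hm; omega
    | succ k ih =>
      intro m hm
      rcases Nat.lt_succ_iff_lt_or_eq.mp hm with h' | h'
      · exact (Relation.TransGen.single (hg k)).trans (ih m h')
      · subst h'; exact Relation.TransGen.single (hg m)
  obtain ⟨m, n, hmn, heq⟩ := Finite.exists_ne_map_eq_of_infinite g
  have hval : (g m).1 = (g n).1 := congrArg Subtype.val heq
  rcases Nat.lt_or_ge m n with h | h
  · exact ⟨(g n).1, hval ▸ hchain n m h⟩
  · have h' : n < m := lt_of_le_of_ne h (fun e => hmn e.symm)
    exact ⟨(g m).1, hval ▸ hchain m n h'⟩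

section Subdiv

variable {V : Type} (G : SimpleGraph V) (u v : V)

lemma subdivide_adj_some_some (a b : V) :
    (subdivide G u v).Adj (some a) (some b) ↔ G.Adj a b ∧ ¬ (s(a,b) = s(u,v)) := Iff.rfl

lemma subdivide_adj_none_some (b : V) :
    (subdivide G u v).Adj none (some b) ↔ b = u ∨ b = v := Iff.rfl

lemma subdivide_adj_some_none (a : V) :
    (subdivide G u v).Adj (some a) none ↔ a = u ∨ a = v := Iff.rfl

lemma subdivide_adj_none_none : ¬ (subdivide G u v).Adj none none := fun h => h

lemma subdivide_edgeSet (he : G.Adj u v) :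
    (subdivide G u v).edgeSet =
      Sym2.map some '' (G.edgeSet \ {s(u,v)}) ∪ {s(none, some u), s(none, some v)} := by
  ext e
  induction e using Sym2.ind with
  | _ x y =>
    match x, y with
    | some a, some b =>
      simp only [SimpleGraph.mem_edgeSet, subdivide_adj_some_some, Set.mem_union,
        Set.mem_image, Set.mem_insert_iff, Set.mem_singleton_iff]
      constructor
      · rintro ⟨hab, hne⟩
        exact Or.inl ⟨s(a,b), ⟨hab, hne⟩, rfl⟩
      · rintro (⟨e', ⟨he1, he2⟩, hmap⟩ | h | h)
        · induction e' using Sym2.ind with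
          | _ p q =>
            simp only [Sym2.map_pair_eq, Sym2.eq_iff] at hmap
            rcases hmap with ⟨hp, hq⟩ | ⟨hp, hq⟩
            · cases hp; cases hq
              exact ⟨he1, he2⟩
            · cases hp; cases hq
              refine ⟨he1.symm, fun hh => he2 ?_⟩
              rwa [Sym2.eq_swap] at hh
        · exact absurd h (by simp [Sym2.eq_iff])
        · exact absurd h (by simp [Sym2.eq_iff])
    | some a, none =>
      simp only [SimpleGraph.mem_edgeSet, subdivide_adj_some_none, Set.mem_union,
        Set.mem_image, Set.mem_insert_iff, Set.mem_singleton_iff]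
      constructor
      · rintro (rfl | rfl)
        · exact Or.inr (Or.inl (by rw [Sym2.eq_swap]))
        · exact Or.inr (Or.inr (by rw [Sym2.eq_swap]))
      · rintro (⟨e', _, hmap⟩ | h | h)
        · exfalso
          induction e' using Sym2.ind with
          | _ p q => simp [Sym2.map_pair_eq, Sym2.eq_iff] at hmap
        · simp [Sym2.eq_iff] at h; tauto
        · simp [Sym2.eq_iff] at h; tauto
    | none, some b =>
      simp only [SimpleGraph.mem_edgeSet, subdivide_adj_none_some, Set.mem_union,
        Set.mem_image, Set.mem_insert_iff, Set.mem_singleton_iff]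
      constructor
      · rintro (rfl | rfl)
        · exact Or.inr (Or.inl rfl)
        · exact Or.inr (Or.inr rfl)
      · rintro (⟨e', _, hmap⟩ | h | h)
        · exfalso
          induction e' using Sym2.ind with
          | _ p q => simp [Sym2.map_pair_eq, Sym2.eq_iff] at hmap
        · simp [Sym2.eq_iff] at h; tauto
        · simp [Sym2.eq_iff] at h; tauto
    | none, none =>
      simp only [SimpleGraph.mem_edgeSet, Set.mem_union, Set.mem_image,
        Set.mem_insert_iff, Set.mem_singleton_iff]
      constructor
      · intro h; exact absurd h (subdivide_adj_none_none G u v)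
      · rintro (⟨e', _, hmap⟩ | h | h)
        · exfalso
          induction e' using Sym2.ind with
          | _ p q => simp [Sym2.map_pair_eq, Sym2.eq_iff] at hmap
        · simp [Sym2.eq_iff] at h
        · simp [Sym2.eq_iff] at h

lemma subdivide_edgeSet_ncard [Fintype V] (he : G.Adj u v) :
    (subdivide G u v).edgeSet.ncard = G.edgeSet.ncard + 1 := by
  rw [subdivide_edgeSet G u v he]
  have hinj : Function.Injective (Sym2.map (some : V → Option V)) :=
    Sym2.map.injective (fun a b => Option.some.inj)
  have hdisj : Disjoint (Sym2.map some '' (G.edgeSet \ {s(u,v)}))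
      ({s(none, some u), s(none, some v)} : Set (Sym2 (Option V))) := by
    rw [Set.disjoint_left]
    rintro e ⟨e', _, rfl⟩ hmem
    induction e' using Sym2.ind with
    | _ p q =>
      simp [Sym2.map_pair_eq, Sym2.eq_iff] at hmem
  rw [Set.ncard_union_eq hdisj (Set.toFinite _) (Set.toFinite _),
    Set.ncard_image_of_injective _ hinj,
    Set.ncard_diff_singleton_of_mem (G.mem_edgeSet.mpr he),
    Set.ncard_pair (by simp [Sym2.eq_iff]; intro h; exact G.ne_of_adj he h)]
  have hpos : 0 < G.edgeSet.ncard :=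
    (Set.ncard_pos (Set.toFinite _)).mpr ⟨_, G.mem_edgeSet.mpr he⟩
  omega

end Subdiv

section Closure

variable {V : Type} [Fintype V] [DecidableEq V] (G : SimpleGraph V) (u v : V) (d : V → ℕ)

/-- Extended indegree requirement on the subdivided vertex set. -/
def dd (d : V → ℕ) : Option V → ℕ := fun x => x.elim 0 d

/-- One step of the closure process. -/
noncomputable def Fstep (S : Finset (Option V)) : Finset (Option V) :=
  S ∪ Finset.univ.filter (fun x => dd d x ≤ (S.filter (fun y => (subdivide G u v).Adj y x)).card)

/-- The closure sequence. -/
noncomputable def Fseq : ℕ → Finset (Option V)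
  | 0 => {none}
  | (k+1) => Fstep G u v d (Fseq k)

lemma subset_Fstep (S : Finset (Option V)) : S ⊆ Fstep G u v d S :=
  Finset.subset_union_left

lemma Fseq_le {k l : ℕ} (h : k ≤ l) : Fseq G u v d k ⊆ Fseq G u v d l := by
  induction l with
  | zero => rw [Nat.le_zero.mp h]
  | succ l ih =>
    by_cases h' : k ≤ l
    · exact (ih h').trans (subset_Fstep G u v d _)
    · have hkl : k = l + 1 := by omega
      rw [hkl]

/-- The stabilized closure. -/
noncomputable def Fcl : Finset (Option V) := Fseq G u v d (Fintype.card (Option V))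

lemma none_mem_Fcl : none ∈ Fcl G u v d :=
  Fseq_le G u v d (Nat.zero_le _) (by simp [Fseq])

lemma Fcl_stab : Fstep G u v d (Fcl G u v d) = Fcl G u v d := by
  set N := Fintype.card (Option V) with hNdef
  have hstep : ∀ k, Fseq G u v d (k+1) = Fseq G u v d k →
      ∀ m, Fseq G u v d (k+m) = Fseq G u v d k := by
    intro k hk m
    induction m with
    | zero => rfl
    | succ m ih =>
      have : Fseq G u v d (k+m+1) = Fstep G u v d (Fseq G u v d (k+m)) := rfl
      rw [show k + (m+1) = (k+m)+1 by omega, this, ih]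
      exact hk
  have key : ∀ k, (∃ j ≤ k, Fseq G u v d (j+1) = Fseq G u v d j) ∨
      k + 1 ≤ (Fseq G u v d k).card := by
    intro k
    induction k with
    | zero => right; simp [Fseq]
    | succ k ih =>
      rcases ih with ⟨j, hj, hje⟩ | hc
      · exact Or.inl ⟨j, Nat.le_succ_of_le hj, hje⟩
      · by_cases hek : Fseq G u v d (k+1) = Fseq G u v d k
        · exact Or.inl ⟨k, Nat.le_succ k, hek⟩
        · right
          have hss : Fseq G u v d k ⊂ Fseq G u v d (k+1) :=
            ⟨Fseq_le G u v d (Nat.le_succ k), fun hsub =>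
              hek (Finset.Subset.antisymm hsub (Fseq_le G u v d (Nat.le_succ k)))⟩
          have := Finset.card_lt_card hss
          omega
  rcases key N with ⟨j, hj, hje⟩ | hc
  · have hN : Fseq G u v d N = Fseq G u v d j := by
      have := hstep j hje (N - j)
      rwa [show j + (N - j) = N by omega] at this
    show Fstep G u v d (Fseq G u v d N) = Fseq G u v d N
    rw [hN]
    exact hje
  · exfalso
    have h1 : (Fseq G u v d N).card ≤ N := by
      rw [hNdef]
      exact Finset.card_le_univ _
    omega

lemma Fcl_not_mem {x : Option V} (hx : x ∉ Fcl G u v d) :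
    ((Fcl G u v d).filter (fun y => (subdivide G u v).Adj y x)).card < dd d x := by
  by_contra h
  push_neg at h
  apply hx
  have : x ∈ Fstep G u v d (Fcl G u v d) :=
    Finset.mem_union_right _ (Finset.mem_filter.mpr ⟨Finset.mem_univ x, h⟩)
  rwa [Fcl_stab] at this

end Closure

section Orient

variable {V : Type} [Fintype V] [DecidableEq V] (G : SimpleGraph V) (u v : V) (d : V → ℕ)

lemma orient_of_closure (he : G.Adj u v)
    (hsum : ∑ w : V, d w = G.edgeSet.ncard + 1)
    (huniv : Fcl G u v d = Finset.univ) :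
    ∃ D : Option V → Option V → Prop, IsDegOrientation G u v d D := by
  classical
  set G' := subdivide G u v with hG'
  set N := Fintype.card (Option V) with hNdef
  have hex : ∀ x : Option V, ∃ k, x ∈ Fseq G u v d k := by
    intro x
    refine ⟨N, ?_⟩
    have : x ∈ Fcl G u v d := by rw [huniv]; exact Finset.mem_univ x
    exact this
  set lev : Option V → ℕ := fun x => Nat.find (hex x) with hlev
  set enum := Fintype.equivFin (Option V) with henum
  set key : Option V → ℕ := fun x => lev x * N + (enum x).val with hkey
  have hkey_lt : ∀ {x y : Option V}, lev x < lev y → key x < key y := by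
    intro x y h
    have h1 : (enum x).val < N := (enum x).isLt
    calc key x = lev x * N + (enum x).val := rfl
      _ < lev x * N + N := Nat.add_lt_add_left h1 _
      _ = (lev x + 1) * N := by ring
      _ ≤ lev y * N := Nat.mul_le_mul_right N h
      _ ≤ lev y * N + (enum y).val := Nat.le_add_right _ _
      _ = key y := rfl
  have hkey_inj : Function.Injective key := by
    intro x y h
    have hlexy : lev x = lev y := by
      rcases lt_trichotomy (lev x) (lev y) with h' | h' | h'
      · exact absurd h (Nat.ne_of_lt (hkey_lt h'))
      · exact h'
      · exact absurd h.symm (Nat.ne_of_lt (hkey_lt h'))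
    have : (enum x).val = (enum y).val := by
      simp only [hkey, hlexy] at h
      omega
    exact enum.injective (Fin.ext this)
  set D : Option V → Option V → Prop := fun a b => G'.Adj a b ∧ key a < key b with hD
  set cD : Option V → ℕ := fun x => inDeg D x with hcD
  -- pointwise lower bound
  have hpoint : ∀ x, dd d x ≤ cD x := by
    intro x
    match x with
    | none => simp [dd]
    | some a =>
      have hx0 : (some a : Option V) ∉ Fseq G u v d 0 := by simp [Fseq]
      have hpos : 0 < lev (some a) := by
        rcases Nat.eq_zero_or_pos (lev (some a)) with h0 | h0
        · exfalso
          have := Nat.find_spec (hex (some a))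
          rw [show Nat.find (hex (some a)) = lev (some a) from rfl, h0] at this
          exact hx0 this
        · exact h0
      set k := lev (some a) - 1 with hk
      have hk1 : lev (some a) = k + 1 := by omega
      have hxin : (some a : Option V) ∈ Fseq G u v d (k+1) := by
        have := Nat.find_spec (hex (some a))
        rwa [show Nat.find (hex (some a)) = lev (some a) from rfl, hk1] at this
      have hxnot : (some a : Option V) ∉ Fseq G u v d k := by
        apply Nat.find_min (hex (some a))
        have hfind : Nat.find (hex (some a)) = lev (some a) := rfl
        rw [hfind]
        omega
      have hxin' : (some a : Option V) ∈ Fstep G u v d (Fseq G u v d k) := hxin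
      rcases Finset.mem_union.mp hxin' with h' | h'
      · exact absurd h' hxnot
      · have hle := (Finset.mem_filter.mp h').2
        show dd d (some a) ≤ inDeg D (some a)
        rw [inDeg_eq_card]
        refine hle.trans (Finset.card_le_card ?_)
        intro y hy
        simp only [Finset.mem_filter] at hy ⊢
        refine ⟨Finset.mem_univ y, hy.2, ?_⟩
        apply hkey_lt
        have : lev y ≤ k := Nat.find_min' (hex y) hy.1
        omega
  -- sum identity
  have hsum_pairs : ∑ x : Option V, cD x =
      (Finset.univ.filter (fun p : Option V × Option V => D p.1 p.2)).card := by
    simp only [hcD, inDeg_eq_card]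
    rw [Finset.card_eq_sum_card_fiberwise
      (f := Prod.snd) (t := Finset.univ) (fun p _ => Finset.mem_univ p.2)]
    apply Finset.sum_congr rfl
    intro b _
    refine (Finset.card_bij' (fun a _ => (a, b)) (fun p _ => p.1) ?_ ?_ ?_ ?_)
    · intro a ha
      simp only [Finset.mem_filter] at ha ⊢
      exact ⟨⟨Finset.mem_univ _, ha.2⟩, trivial⟩
    · intro p hp
      simp only [Finset.mem_filter] at hp ⊢
      exact ⟨Finset.mem_univ _, hp.2 ▸ hp.1.2⟩
    · intro a _; rfl
    · intro p hp
      simp only [Finset.mem_filter] at hp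
      exact Prod.ext rfl hp.2.symm
  have hpairs_edges : (Finset.univ.filter (fun p : Option V × Option V => D p.1 p.2)).card =
      G'.edgeSet.toFinset.card := by
    refine Finset.card_bij (fun p _ => s(p.1, p.2)) ?_ ?_ ?_
    · intro p hp
      simp only [Finset.mem_filter] at hp
      rw [Set.mem_toFinset]
      exact hp.2.1
    · intro p hp q hq hpq
      simp only [Finset.mem_filter] at hp hq
      rcases Sym2.eq_iff.mp hpq with ⟨h1, h2⟩ | ⟨h1, h2⟩
      · exact Prod.ext h1 h2
      · exfalso
        have h3 := hp.2.2
        rw [h1, h2] at h3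
        exact lt_asymm h3 hq.2.2
    · intro e hee
      rw [Set.mem_toFinset] at hee
      induction e using Sym2.ind with
      | _ a b =>
        have hadj : G'.Adj a b := hee
        have hne : key a ≠ key b := fun hkab => G'.ne_of_adj hadj (hkey_inj hkab)
        rcases lt_or_gt_of_ne hne with h' | h'
        · exact ⟨(a, b), by simp only [Finset.mem_filter]; exact ⟨Finset.mem_univ _, hadj, h'⟩, rfl⟩
        · exact ⟨(b, a), by simp only [Finset.mem_filter]; exact ⟨Finset.mem_univ _, hadj.symm, h'⟩,
            by rw [Sym2.eq_swap]⟩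
  have hedges : G'.edgeSet.toFinset.card = G.edgeSet.ncard + 1 := by
    rw [← Set.ncard_eq_toFinset_card']
    exact subdivide_edgeSet_ncard G u v he
  have hsum_d : ∑ x : Option V, dd d x = G.edgeSet.ncard + 1 := by
    rw [Fintype.sum_option]
    simpa [dd] using hsum
  have hsum_eq : ∑ x : Option V, dd d x = ∑ x : Option V, cD x := by
    rw [hsum_pairs, hpairs_edges, hedges, hsum_d]
  have hface : ∀ x : Option V, dd d x = cD x := by
    have := (Finset.sum_eq_sum_iff_of_le (fun i _ => hpoint i)).mp hsum_eq
    intro x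
    exact this x (Finset.mem_univ x)
  refine ⟨D, ⟨fun a b h => h.1, ?_⟩, ?_, ?_, ?_⟩
  · intro a b hab
    constructor
    · rintro ⟨_, h2⟩ ⟨_, h2'⟩
      exact lt_asymm h2 h2'
    · intro hnD
      refine ⟨hab, ?_⟩
      have hne : key a ≠ key b := fun hkab => G'.ne_of_adj hab (hkey_inj hkab)
      rcases lt_or_gt_of_ne hne with h' | h'
      · exact h'
      · exact absurd ⟨hab.symm, h'⟩ hnD
  · have htg : ∀ a b : Option V, Relation.TransGen D a b → key a < key b := by
      intro a b h
      induction h with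
      | single h' => exact h'.2
      | tail _ h' ih => exact lt_trans ih h'.2
    intro a hcyc
    exact lt_irrefl _ (htg a a hcyc)
  · have h0 := hface none
    simp only [hcD, dd, Option.elim] at h0
    exact h0.symm
  · intro w
    have h0 := hface (some w)
    simp only [hcD, dd, Option.elim] at h0
    exact h0.symm

end Orient

section Cut

variable {V : Type} [Fintype V] [DecidableEq V] (G : SimpleGraph V) (u v : V) (d : V → ℕ)

lemma cut_of_not_closure (hne : Fcl G u v d ≠ Finset.univ) :
    ∃ (V' : Set V) (E' : Set (Sym2 (Option V))), IsDegCut G u v d V' E' := by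
  classical
  set G' := subdivide G u v with hG'
  set F := Fcl G u v d with hF
  have hnone : (none : Option V) ∈ F := none_mem_Fcl G u v d
  set E' : Set (Sym2 (Option V)) :=
    {e | e ∈ G'.edgeSet ∧ ∃ x ∈ F, ∃ y ∉ F, e = s(x, y)} with hE'
  have hmemE' : ∀ {x y : Option V}, G'.Adj x y → x ∈ F → y ∉ F → s(x, y) ∈ E' :=
    fun hadj hx hy => ⟨G'.mem_edgeSet.mpr hadj, _, hx, _, hy, rfl⟩
  have hstay : ∀ {x y : Option V}, (G'.deleteEdges E').Walk x y → x ∈ F → y ∈ F := by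
    intro x y p
    induction p with
    | nil => exact id
    | @cons x z y h p ih =>
      intro hx
      apply ih
      rw [SimpleGraph.deleteEdges_adj] at h
      by_contra hz
      exact h.2 (hmemE' h.1 hx hz)
  refine ⟨{w : V | (some w : Option V) ∉ F}, E', ?_, ?_, ?_, ?_, ?_⟩
  · intro e he'
    exact he'.1
  · intro hc
    rw [Ne, Finset.eq_univ_iff_forall] at hne
    push_neg at hne
    obtain ⟨x, hx⟩ := hne
    obtain ⟨p⟩ := hc.preconnected none x
    exact hx (hstay p hnone)
  · intro w hw hreach
    obtain ⟨p⟩ := hreach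
    exact hw (hstay p hnone)
  · rintro e ⟨hedge, x, hx, y, hy, rfl⟩
    have hyne : y ≠ none := fun h => hy (h ▸ hnone)
    obtain ⟨w, rfl⟩ := Option.ne_none_iff_exists'.mp hyne
    refine ⟨w, ⟨hy, by rw [Sym2.mem_iff]; right; rfl⟩, ?_⟩
    rintro w' ⟨hw', hmem⟩
    rw [Sym2.mem_iff] at hmem
    rcases hmem with hmem | hmem
    · exact absurd (hmem ▸ hx) hw'
    · exact Option.some.inj hmem
  · intro w hw
    have hw' : (some w : Option V) ∉ F := hw
    have hseteq : {e ∈ E' | (some w : Option V) ∈ e} =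
        (fun f => s(f, some w)) '' {f : Option V | f ∈ F ∧ G'.Adj f (some w)} := by
      ext e
      constructor
      · rintro ⟨⟨hedge, x, hx, y, hy, rfl⟩, hmem⟩
        rw [Sym2.mem_iff] at hmem
        rcases hmem with hmem | hmem
        · exact absurd (hmem ▸ hx) hw'
        · subst hmem
          exact ⟨x, ⟨hx, G'.mem_edgeSet.mp hedge⟩, rfl⟩
      · rintro ⟨f, ⟨hf, hadj⟩, rfl⟩
        exact ⟨hmemE' hadj hf hw', by rw [Sym2.mem_iff]; right; rfl⟩
    rw [hseteq, Set.ncard_image_of_injective _ (fun a b hab => Sym2.congr_left.mp hab)]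
    have h3 : {f : Option V | f ∈ F ∧ G'.Adj f (some w)} =
        ↑(F.filter (fun y => G'.Adj y (some w))) := by
      ext f
      constructor
      · rintro ⟨h1, h2⟩
        simp only [Finset.mem_coe, Finset.mem_filter]
        exact ⟨h1, h2⟩
      · intro hmem
        simp only [Finset.mem_coe, Finset.mem_filter] at hmem
        exact hmem
    rw [h3, Set.ncard_coe_finset]
    exact Fcl_not_mem G u v d hw'

end Cut

section Forward

variable {V : Type} [Fintype V] [DecidableEq V] (G : SimpleGraph V) (u v : V) (d : V → ℕ)

lemma no_cut_of_orientation (hd1 : ∀ w : V, 1 ≤ d w)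
    (D : Option V → Option V → Prop) (hD : IsDegOrientation G u v d D)
    (V' : Set V) (E' : Set (Sym2 (Option V))) (hcut : IsDegCut G u v d V' E') : False := by
  classical
  obtain ⟨⟨hD1, _⟩, hacyc, _, hdeg⟩ := hD
  obtain ⟨hsub, hconn, hreachV, huniq, hcount⟩ := hcut
  set G' := subdivide G u v with hG'
  set Gd := G'.deleteEdges E' with hGd
  set U : Set (Option V) := {x | ¬ Gd.Reachable none x} with hU
  -- U is nonempty
  have hUne : U.Nonempty := by
    rw [SimpleGraph.connected_iff] at hconn
    push_neg at hconn
    have hnp : ¬ Gd.Preconnected := fun hp => @IsEmpty.false _ (hconn hp) none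
    rw [SimpleGraph.Preconnected] at hnp
    push_neg at hnp
    obtain ⟨a, b, hab⟩ := hnp
    by_cases ha : Gd.Reachable none a
    · refine ⟨b, ?_⟩
      intro hb
      exact hab (ha.symm.trans hb)
    · exact ⟨a, ha⟩
  -- every vertex of U has an in-neighbour in U
  have hpred : ∀ x ∈ U, ∃ y ∈ U, D y x := by
    intro x hx
    match x with
    | none => exact absurd (SimpleGraph.Reachable.refl none) hx
    | some a =>
      by_contra hnall
      push_neg at hnall
      have hally : ∀ y, D y (some a) → Gd.Reachable none y := fun y hy =>
        not_not.mp (fun h => hnall y h hy)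
      have hedgeE' : ∀ y, D y (some a) → s(y, some a) ∈ E' := by
        intro y hy
        by_contra hnot
        apply hx
        have hadj : Gd.Adj y (some a) := SimpleGraph.deleteEdges_adj.mpr ⟨hD1 _ _ hy, hnot⟩
        exact (hally y hy).trans hadj.reachable
      have hpos : 0 < Nat.card {y // D y (some a)} := by
        have : Nat.card {y // D y (some a)} = inDeg D (some a) := rfl
        rw [this, hdeg]
        exact hd1 a
      have hnemp : Nonempty {y // D y (some a)} := (Nat.card_pos_iff.mp hpos).1
      by_cases haV : a ∈ V'
      · -- counting argument
        set S : Set (Sym2 (Option V)) := {e ∈ E' | (some a : Option V) ∈ e} with hS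
        let f : {y // D y (some a)} → {e // e ∈ S} := fun y =>
          ⟨s(y.1, some a), ⟨hedgeE' y.1 y.2, by rw [Sym2.mem_iff]; right; rfl⟩⟩
        have hinj : Function.Injective f := by
          intro y z h
          have h2 : s(y.1, some a) = s(z.1, some a) := congrArg Subtype.val h
          exact Subtype.ext (Sym2.congr_left.mp h2)
        have hle := Nat.card_le_card_of_injective f hinj
        have h1 : Nat.card {y // D y (some a)} = d a := hdeg a
        have h2 : Nat.card {e // e ∈ S} = S.ncard := Nat.card_coe_set_eq S
        have h3 := hcount a haV
        rw [h1, h2] at hle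
        rw [← hS] at h3
        omega
      · obtain ⟨⟨y, hy⟩⟩ := hnemp
        have hEy := hedgeE' y hy
        obtain ⟨w₀, ⟨hw₀V, hw₀mem⟩, _⟩ := huniq _ hEy
        rw [Sym2.mem_iff] at hw₀mem
        rcases hw₀mem with h | h
        · exact (hreachV w₀ hw₀V) (h ▸ hally y hy)
        · exact haV (Option.some.inj h ▸ hw₀V)
  obtain ⟨c, hc⟩ := exists_cycle_of_pred D U hUne hpred
  exact hacyc c hc

end Forward

/-- Characterization: with `∑ d⁻(v) = |E| + 1`, the triple `(N, e_ρ, d⁻)` is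
orientable iff it has no degree cut. -/
theorem deg_orientable_iff_no_degcut {V X : Type} [Fintype V] [DecidableEq V]
    (G : SimpleGraph V) [DecidableRel G.Adj] (hnet : IsUndirNet G)
    (labels : X ≃ {w : V // G.degree w = 1})
    (u v : V) (he : G.Adj u v) (d : V → ℕ)
    (hd : ∀ w : V, 1 ≤ d w ∧ d w ≤ G.degree w)
    (hsum : ∑ w : V, d w = G.edgeSet.ncard + 1) :
    (∃ D : Option V → Option V → Prop, IsDegOrientation G u v d D) ↔
      ¬ ∃ (V' : Set V) (E' : Set (Sym2 (Option V))), IsDegCut G u v d V' E' := by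
  constructor
  · rintro ⟨D, hD⟩ ⟨V', E', hcut⟩
    exact no_cut_of_orientation G u v d (fun w => (hd w).1) D hD V' E' hcut
  · intro hno
    by_cases hcl : Fcl G u v d = Finset.univ
    · exact orient_of_closure G u v d he hsum hcl
    · exact absurd (cut_of_not_closure G u v d hcl) hno
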